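/- Let d ∈ {2,3} and s ∈ [0, 1/2]. There exists a constant C > 0, depending only on d and s, such that for all k, t > 0 with kt ≥ 1 and all measurable functions F, G : ℝ^d → [0, ∞), ∫_{Ω₂} |m_{k,t}(ξ) + (2kt/‖ξ⁻‖ − 1)^{d−2} m_{k,t}(ξ*)| · (1 + ‖ξ‖²)^s · F(ξ) G(ξ) dξ ≤ C k^{2s} t^{2s−2} ‖F‖_{L²(ℝ^d)} ‖G‖_{L²(ℝ^d)}, where Ω₂ := {ξ ∈ ℝ^d : kt < ‖ξ⁻‖ < 3kt/2 and |ξ_d| < kt/2} and ξ* := ((2kt/‖ξ⁻‖ − 1)ξ⁻, −ξ_d). -/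

import Mathlib

open MeasureTheory
open scoped ENNReal

/-- `‖ξ⁻‖`, the Euclidean norm of the first `d − 1` coordinates of `ξ ∈ ℝ^d`. -/
noncomputable def xiMinusNorm {d : ℕ} (ξ : EuclideanSpace ℝ (Fin d)) : ℝ :=
  Real.sqrt (∑ i ∈ Finset.univ.filter (fun i : Fin d => (i : ℕ) < d - 1), ξ i ^ 2)

/-- `ξ_d`, the last coordinate of `ξ ∈ ℝ^d`. -/
noncomputable def xiLast {d : ℕ} (hd : 0 < d) (ξ : EuclideanSpace ℝ (Fin d)) : ℝ :=
  ξ ⟨d - 1, Nat.sub_lt hd one_pos⟩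

/-- The symbol denominator `den_{k,t}(ξ) = (‖ξ⁻‖² − k²t² + ξ_d²) + 2ik√(t²+1)ξ_d`. -/
noncomputable def denom (k t : ℝ) {d : ℕ} (hd : 0 < d) (ξ : EuclideanSpace ℝ (Fin d)) : ℂ :=
  ((xiMinusNorm ξ ^ 2 - k ^ 2 * t ^ 2 + xiLast hd ξ ^ 2 : ℝ) : ℂ)
    + 2 * Complex.I * (k : ℂ) * (Real.sqrt (t ^ 2 + 1) : ℂ) * (xiLast hd ξ : ℂ)

/-- The symbol `m_{k,t}(ξ) = k² / den_{k,t}(ξ)`. -/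
noncomputable def mSymb (k t : ℝ) {d : ℕ} (hd : 0 < d) (ξ : EuclideanSpace ℝ (Fin d)) : ℂ :=
  (k : ℂ) ^ 2 / denom k t hd ξ

/-- The reflected point `ξ* = ((2kt/‖ξ⁻‖ − 1)ξ⁻, −ξ_d)`. -/
noncomputable def xiStar (k t : ℝ) {d : ℕ} (ξ : EuclideanSpace ℝ (Fin d)) :
    EuclideanSpace ℝ (Fin d) :=
  (EuclideanSpace.equiv (Fin d) ℝ).symm fun i =>
    if (i : ℕ) = d - 1 then -ξ i else (2 * k * t / xiMinusNorm ξ - 1) * ξ i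

set_option maxHeartbeats 1000000 in
lemma key_complex (k t r b c K : ℝ) (hk : 0 < k) (ht : 0 < t)
    (hr1 : k * t < r) (hr2 : r < 3 * k * t / 2) (hb : |b| < k * t / 2)
    (hK : k * t ≤ K)
    (hc : c = 1 ∨ c = 2 * k * t / r - 1) :
    ‖(k : ℂ) ^ 2 / (((r ^ 2 - k ^ 2 * t ^ 2 + b ^ 2 : ℝ) : ℂ) + ((2 * K * b : ℝ) : ℂ) * Complex.I)
      + (c : ℂ) * ((k : ℂ) ^ 2 / ((((2 * k * t - r) ^ 2 - k ^ 2 * t ^ 2 + b ^ 2 : ℝ) : ℂ) + ((2 * K * (-b) : ℝ) : ℂ) * Complex.I))‖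
      ≤ 6 / t ^ 2 := by
  have hkt : 0 < k * t := mul_pos hk ht
  have hr0 : 0 < r := hkt.trans hr1
  have hK0 : 0 < K := hkt.trans_le hK
  set a : ℝ := r - k * t with ha
  have ha0 : 0 < a := by rw [ha]; linarith
  have ha2 : 2 * a < k * t := by rw [ha]; linarith
  set D : ℂ := ((r ^ 2 - k ^ 2 * t ^ 2 + b ^ 2 : ℝ) : ℂ) + ((2 * K * b : ℝ) : ℂ) * Complex.I with hD
  set Ds : ℂ := (((2 * k * t - r) ^ 2 - k ^ 2 * t ^ 2 + b ^ 2 : ℝ) : ℂ) + ((2 * K * (-b) : ℝ) : ℂ) * Complex.I with hDs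
  have hDre : D.re = a * (r + k * t) + b ^ 2 := by
    rw [hD, ha]; simp only [Complex.add_re, Complex.ofReal_re, Complex.mul_re, Complex.I_re,
      Complex.I_im, Complex.ofReal_im]; ring
  have hDim : D.im = 2 * K * b := by
    rw [hD]; simp only [Complex.add_im, Complex.ofReal_im, Complex.mul_im, Complex.I_re,
      Complex.I_im, Complex.ofReal_re]; ring
  have hDsre : Ds.re = b ^ 2 - a * (3 * k * t - r) := by
    rw [hDs, ha]; simp only [Complex.add_re, Complex.ofReal_re, Complex.mul_re, Complex.I_re,
      Complex.I_im, Complex.ofReal_im]; ring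
  have hDsim : Ds.im = 2 * K * (-b) := by
    rw [hDs]; simp only [Complex.add_im, Complex.ofReal_im, Complex.mul_im, Complex.I_re,
      Complex.I_im, Complex.ofReal_re]; ring
  set l : ℝ := 2 * k * t / r - 1 with hl
  have hl0 : 0 ≤ l := by
    rw [hl, sub_nonneg, le_div_iff₀ hr0]; linarith
  have hl1 : l ≤ 1 := by
    rw [hl, sub_le_iff_le_add, div_le_iff₀ hr0]; linarith
  set N : ℂ := (((1 + l) * b ^ 2 - 2 * k * t * a ^ 2 / r : ℝ) : ℂ)
      + ((-(4 * K * a * b / r) : ℝ) : ℂ) * Complex.I with hN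
  have hNid : Ds + (l : ℂ) * D = N := by
    rw [hN, hD, hDs, hl, ha]
    apply Complex.ext
    · simp only [Complex.add_re, Complex.ofReal_re, Complex.mul_re, Complex.I_re,
        Complex.I_im, Complex.ofReal_im]
      field_simp; ring
    · simp only [Complex.add_im, Complex.ofReal_im, Complex.mul_im, Complex.I_re,
        Complex.I_im, Complex.ofReal_re]
      field_simp; ring
  have hNre : N.re = (1 + l) * b ^ 2 - 2 * k * t * a ^ 2 / r := by
    rw [hN]; simp only [Complex.add_re, Complex.ofReal_re, Complex.mul_re, Complex.I_re,
      Complex.I_im, Complex.ofReal_im]; ring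
  have hNim : N.im = -(4 * K * a * b / r) := by
    rw [hN]; simp only [Complex.add_im, Complex.ofReal_im, Complex.mul_im, Complex.I_re,
      Complex.I_im, Complex.ofReal_re]; ring
  have hcl : |c - l| ≤ 2 * a / r := by
    rcases hc with hc | hc
    · have hcv : c - l = 2 * a / r := by rw [hc, hl, ha]; field_simp; ring
      rw [hcv, abs_of_nonneg (by positivity)]
    · rw [hc]; simp only [sub_self, abs_zero]; positivity
  clear_value a l N D Ds
  clear ha hl hN hD hDs hc
  -- lower bounds on |D|, |Ds|
  have hDa : 2 * a * (k * t) ≤ ‖D‖ := by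
    refine le_trans ?_ ((le_abs_self D.re).trans (Complex.abs_re_le_norm D))
    rw [hDre]; nlinarith
  have hDb : 2 * K * |b| ≤ ‖D‖ := by
    refine le_trans ?_ (Complex.abs_im_le_norm D)
    rw [hDim, abs_mul, abs_of_pos (by positivity : (0:ℝ) < 2 * K)]
  have hDsb : 2 * K * |b| ≤ ‖Ds‖ := by
    refine le_trans ?_ (Complex.abs_im_le_norm Ds)
    rw [hDsim, abs_mul, abs_of_pos (by positivity : (0:ℝ) < 2 * K), abs_neg]
  have hDsa : 3 / 4 * (a * (k * t)) ≤ ‖Ds‖ := by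
    rcases le_or_gt (b ^ 2) (a * (3 * k * t - r) / 2) with h | h
    · refine le_trans (le_trans ?_ (neg_le_abs Ds.re)) (Complex.abs_re_le_norm Ds)
      rw [hDsre]; nlinarith
    · refine le_trans ?_ hDsb
      have hab : a ≤ |b| := by nlinarith [_root_.sq_abs b, abs_nonneg b]
      nlinarith
  have hDpos : 0 < ‖D‖ := lt_of_lt_of_le (by positivity) hDa
  have hDspos : 0 < ‖Ds‖ := lt_of_lt_of_le (by positivity) hDsa
  have hDne : D ≠ 0 := by intro h; rw [h] at hDpos; simp at hDpos
  have hDsne : Ds ≠ 0 := by intro h; rw [h] at hDspos; simp at hDspos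
  -- numerator bound
  have habsN : ‖N‖ ≤ (2 * a ^ 2 + 2 * b ^ 2) + 4 * K * a * |b| / (k * t) := by
    have t1 : ‖N‖ ≤ |N.re| + |N.im| := Complex.norm_le_abs_re_add_abs_im N
    rw [hNre, hNim] at t1
    refine le_trans t1 (add_le_add ?_ ?_)
    · have hq : 0 ≤ 2 * k * t * a ^ 2 / r := by positivity
      have hq2 : 2 * k * t * a ^ 2 / r ≤ 2 * a ^ 2 := by
        rw [div_le_iff₀ hr0]; nlinarith
      have hbb : (0:ℝ) ≤ b ^ 2 := sq_nonneg b
      have hlb : 0 ≤ l * b ^ 2 := by positivity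
      have hlb2 : l * b ^ 2 ≤ b ^ 2 := by nlinarith
      rw [abs_le]; constructor <;> linarith
    · rw [abs_neg, abs_div, abs_of_pos hr0, abs_mul, abs_mul,
        abs_of_pos (by positivity : (0:ℝ) < 4 * K), abs_of_pos ha0]
      rw [div_le_div_iff₀ hr0 hkt]
      nlinarith [abs_nonneg b, mul_nonneg (mul_nonneg (by positivity : (0:ℝ) ≤ 4*K*a) (abs_nonneg b)) ha0.le]
  -- main term bound
  have hmain : ‖(k : ℂ) ^ 2 / D + (l : ℂ) * ((k : ℂ) ^ 2 / Ds)‖ ≤ 3 / t ^ 2 := by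
    have hid : (k : ℂ) ^ 2 / D + (l : ℂ) * ((k : ℂ) ^ 2 / Ds)
        = (k : ℂ) ^ 2 * N / (D * Ds) := by
      rw [← hNid]; field_simp
    rw [hid, norm_div, norm_mul, norm_mul, norm_pow, Complex.norm_real, Real.norm_eq_abs, abs_of_pos hk]
    rw [div_le_div_iff₀ (by positivity) (by positivity)]
    have f1 : 3 / 2 * (a ^ 2 * (k * t) ^ 2) ≤ ‖D‖ * ‖Ds‖ := by
      have := mul_le_mul hDa hDsa (by positivity) (norm_nonneg D)
      nlinarith
    have f3 : 4 * (a * (k * t)) * (K * |b|) ≤ ‖D‖ * ‖Ds‖ := by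
      have := mul_le_mul hDa hDsb (by positivity) (norm_nonneg D)
      nlinarith
    have hstep : k ^ 2 * ‖N‖ * t ^ 2
        ≤ k ^ 2 * t ^ 2 * (2 * a ^ 2 + 2 * b ^ 2) + 4 * k * K * a * |b| * t := by
      have e : k ^ 2 * t ^ 2 * (4 * K * a * |b| / (k * t)) = 4 * k * K * a * |b| * t := by
        field_simp
      have hm := mul_le_mul_of_nonneg_left habsN (by positivity : (0:ℝ) ≤ k ^ 2 * t ^ 2)
      rw [mul_add, e] at hm
      calc k ^ 2 * ‖N‖ * t ^ 2 = k ^ 2 * t ^ 2 * ‖N‖ := by ring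
        _ ≤ _ := hm
    have f2' : 4 * K ^ 2 * b ^ 2 ≤ ‖D‖ * ‖Ds‖ := by
      have := mul_le_mul hDb hDsb (by positivity) (norm_nonneg D)
      nlinarith [_root_.sq_abs b]
    have hKK : k * t * (k * t) ≤ K * K := mul_le_mul hK hK hkt.le hK0.le
    have hK2b : k ^ 2 * t ^ 2 * b ^ 2 ≤ K ^ 2 * b ^ 2 := by nlinarith [hKK, sq_nonneg b]
    have hADAS : (0:ℝ) ≤ ‖D‖ * ‖Ds‖ := (mul_pos hDpos hDspos).le
    nlinarith [hstep, f1, f2', f3, hK2b, hADAS]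
  -- correction term
  have hcorr : ‖((c - l : ℝ) : ℂ) * ((k : ℂ) ^ 2 / Ds)‖ ≤ 3 / t ^ 2 := by
    rw [norm_mul, Complex.norm_real, Real.norm_eq_abs, norm_div, norm_pow, Complex.norm_real, Real.norm_eq_abs, abs_of_pos hk]
    have h1 : |c - l| * (k ^ 2 / ‖Ds‖) ≤ (2 * a / r) * (k ^ 2 / (3 / 4 * (a * (k * t)))) := by
      apply mul_le_mul hcl _ (by positivity) (by positivity)
      exact div_le_div_of_nonneg_left (by positivity) (by positivity) hDsa
    refine le_trans h1 ?_
    have heq : (2 * a / r) * (k ^ 2 / (3 / 4 * (a * (k * t)))) = 8 * k / (3 * (r * t)) := by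
      field_simp; ring
    rw [heq]
    have h2 : (0:ℝ) < 3 * (r * t) := by positivity
    have h3 : (0:ℝ) < t ^ 2 := by positivity
    rw [div_le_div_iff₀ h2 h3]
    have h4 : k * t * t ≤ r * t := mul_le_mul_of_nonneg_right hr1.le ht.le
    linarith [h4]
  -- combine
  have hsplit : (k : ℂ) ^ 2 / D + (c : ℂ) * ((k : ℂ) ^ 2 / Ds)
      = ((k : ℂ) ^ 2 / D + (l : ℂ) * ((k : ℂ) ^ 2 / Ds))
        + ((c - l : ℝ) : ℂ) * ((k : ℂ) ^ 2 / Ds) := by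
    push_cast; ring
  rw [hsplit]
  refine le_trans (norm_add_le _ _) (le_trans (add_le_add hmain hcorr) (le_of_eq (by ring)))


lemma xiLast_xiStar {d : ℕ} (hd : 0 < d) (k t : ℝ) (ξ : EuclideanSpace ℝ (Fin d)) :
    xiLast hd (xiStar k t ξ) = - xiLast hd ξ := by
  simp [xiLast, xiStar, EuclideanSpace.equiv]

lemma xiMinusNorm_xiStar {d : ℕ} (k t : ℝ) (ξ : EuclideanSpace ℝ (Fin d))
    (h : 0 ≤ 2 * k * t / xiMinusNorm ξ - 1) :
    xiMinusNorm (xiStar k t ξ) = (2 * k * t / xiMinusNorm ξ - 1) * xiMinusNorm ξ := by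
  set l : ℝ := 2 * k * t / xiMinusNorm ξ - 1 with hl
  have h1 : ∑ i ∈ Finset.univ.filter (fun i : Fin d => (i : ℕ) < d - 1), (xiStar k t ξ) i ^ 2
      = l ^ 2 * ∑ i ∈ Finset.univ.filter (fun i : Fin d => (i : ℕ) < d - 1), ξ i ^ 2 := by
    rw [Finset.mul_sum]
    apply Finset.sum_congr rfl
    intro i hi
    have hi' : (i : ℕ) < d - 1 := by simpa using hi
    have : (xiStar k t ξ) i = l * ξ i := by
      simp [xiStar, EuclideanSpace.equiv, hi'.ne, hl]
    rw [this]; ring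
  rw [xiMinusNorm, h1, Real.sqrt_mul (sq_nonneg l), Real.sqrt_sq h]
  rfl

lemma norm_sq_eq {d : ℕ} (hd : 0 < d) (ξ : EuclideanSpace ℝ (Fin d)) :
    ‖ξ‖ ^ 2 = xiMinusNorm ξ ^ 2 + xiLast hd ξ ^ 2 := by
  have hnn : (0:ℝ) ≤ ∑ i : Fin d, ξ i ^ 2 := Finset.sum_nonneg fun i _ => sq_nonneg _
  have h1 : ‖ξ‖ ^ 2 = ∑ i : Fin d, ξ i ^ 2 := by
    rw [EuclideanSpace.norm_eq]
    rw [Real.sq_sqrt (by positivity)]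
    exact Finset.sum_congr rfl fun i _ => by rw [Real.norm_eq_abs, sq_abs]
  have h2 : xiMinusNorm ξ ^ 2
      = ∑ i ∈ Finset.univ.filter (fun i : Fin d => (i : ℕ) < d - 1), ξ i ^ 2 := by
    rw [xiMinusNorm, Real.sq_sqrt (Finset.sum_nonneg fun i _ => sq_nonneg _)]
  have h3 : ∑ i ∈ Finset.univ.filter (fun i : Fin d => ¬ (i : ℕ) < d - 1), ξ i ^ 2
      = xiLast hd ξ ^ 2 := by
    have : Finset.univ.filter (fun i : Fin d => ¬ (i : ℕ) < d - 1)
        = {(⟨d - 1, Nat.sub_lt hd one_pos⟩ : Fin d)} := by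
      ext i
      simp only [Finset.mem_filter, Finset.mem_univ, true_and, Finset.mem_singleton]
      constructor
      · intro hi
        have := i.isLt
        apply Fin.ext
        simp only []
        omega
      · intro hi
        rw [hi]
        simp only []
        omega
    rw [this, Finset.sum_singleton, xiLast]
  rw [h1, h2, ← h3, Finset.sum_filter_add_sum_filter_not]

lemma mSymb_pointwise {d : ℕ} (hd2 : d = 2 ∨ d = 3) (hd : 0 < d) (k t : ℝ)
    (hk : 0 < k) (ht : 0 < t) (ξ : EuclideanSpace ℝ (Fin d))
    (h1 : k * t < xiMinusNorm ξ) (h2 : xiMinusNorm ξ < 3 * k * t / 2)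
    (h3 : |xiLast hd ξ| < k * t / 2) :
    ‖mSymb k t hd ξ
        + ((2 * k * t / xiMinusNorm ξ - 1 : ℝ) ^ (d - 2) : ℝ) * mSymb k t hd (xiStar k t ξ)‖
      ≤ 6 / t ^ 2 := by
  have hkt : 0 < k * t := mul_pos hk ht
  have hr0 : 0 < xiMinusNorm ξ := hkt.trans h1
  set r : ℝ := xiMinusNorm ξ with hr
  set b : ℝ := xiLast hd ξ with hb
  have hl : 0 ≤ 2 * k * t / r - 1 := by
    rw [sub_nonneg, le_div_iff₀ hr0]; linarith
  have hKge : k * t ≤ k * Real.sqrt (t ^ 2 + 1) := by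
    have hts : t ≤ Real.sqrt (t ^ 2 + 1) := by
      have := Real.sqrt_le_sqrt (show t ^ 2 ≤ t ^ 2 + 1 by linarith)
      rwa [Real.sqrt_sq ht.le] at this
    exact mul_le_mul_of_nonneg_left hts hk.le
  have hstar_norm : xiMinusNorm (xiStar k t ξ) = 2 * k * t - r := by
    rw [xiMinusNorm_xiStar k t ξ hl, ← hr]
    field_simp
  have hstar_last : xiLast hd (xiStar k t ξ) = -b := xiLast_xiStar hd k t ξ
  have hden1 : denom k t hd ξ
      = ((r ^ 2 - k ^ 2 * t ^ 2 + b ^ 2 : ℝ) : ℂ)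
        + ((2 * (k * Real.sqrt (t ^ 2 + 1)) * b : ℝ) : ℂ) * Complex.I := by
    rw [denom, ← hr, ← hb]; push_cast; ring
  have hden2 : denom k t hd (xiStar k t ξ)
      = (((2 * k * t - r) ^ 2 - k ^ 2 * t ^ 2 + b ^ 2 : ℝ) : ℂ)
        + ((2 * (k * Real.sqrt (t ^ 2 + 1)) * (-b) : ℝ) : ℂ) * Complex.I := by
    rw [denom, hstar_norm, hstar_last]; push_cast; ring
  have hc : ((2 * k * t / r - 1 : ℝ) ^ (d - 2) : ℝ) = 1
      ∨ ((2 * k * t / r - 1 : ℝ) ^ (d - 2) : ℝ) = 2 * k * t / r - 1 := by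
    rcases hd2 with h | h
    · left; rw [h]; norm_num
    · right; rw [h]; norm_num
  rw [mSymb, mSymb, hden1, hden2]
  exact key_complex k t r b _ (k * Real.sqrt (t ^ 2 + 1)) hk ht h1 h2 h3 hKge hc

lemma weight_bound (k t s : ℝ) (hk : 0 < k) (ht : 0 < t) (hkt1 : 1 ≤ k * t)
    (hs : 0 ≤ s) (hs' : s ≤ 1 / 2) {d : ℕ} (hd : 0 < d) (ξ : EuclideanSpace ℝ (Fin d))
    (h1 : k * t < xiMinusNorm ξ) (h2 : xiMinusNorm ξ < 3 * k * t / 2)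
    (h3 : |xiLast hd ξ| < k * t / 2) :
    (1 + ‖ξ‖ ^ 2) ^ s ≤ 2 * (k ^ (2 * s) * t ^ (2 * s)) := by
  have hkt : 0 < k * t := mul_pos hk ht
  have hb1 : 1 + ‖ξ‖ ^ 2 ≤ 4 * (k * t) ^ 2 := by
    rw [norm_sq_eq hd ξ]
    have e1 : xiMinusNorm ξ ^ 2 ≤ (3 * k * t / 2) ^ 2 := by
      nlinarith [(Real.sqrt_nonneg _ : (0:ℝ) ≤ xiMinusNorm ξ)]
    have e2 : xiLast hd ξ ^ 2 ≤ (k * t / 2) ^ 2 := by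
      nlinarith [abs_nonneg (xiLast hd ξ), _root_.sq_abs (xiLast hd ξ)]
    nlinarith
  have hstep : (1 + ‖ξ‖ ^ 2) ^ s ≤ (4 * (k * t) ^ 2) ^ s := by
    apply Real.rpow_le_rpow (by positivity) hb1 hs
  refine hstep.trans ?_
  rw [Real.mul_rpow (by norm_num) (by positivity)]
  have h4s : (4:ℝ) ^ s ≤ 2 := by
    have : (4:ℝ) ^ s ≤ (4:ℝ) ^ (1/2 : ℝ) :=
      Real.rpow_le_rpow_of_exponent_le (by norm_num) hs'
    refine this.trans (le_of_eq ?_)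
    rw [show (4:ℝ) = 2 ^ (2:ℕ) by norm_num, ← Real.rpow_natCast 2 2,
      ← Real.rpow_mul (by norm_num)]
    norm_num
  have hpow : ((k * t) ^ 2) ^ s = k ^ (2 * s) * t ^ (2 * s) := by
    rw [← Real.rpow_natCast (k * t) 2, ← Real.rpow_mul hkt.le,
      Real.mul_rpow hk.le ht.le]
    norm_num
  rw [hpow]
  apply mul_le_mul_of_nonneg_right h4s (by positivity)

/-- Estimate of the term `II₂₁`: the symmetrized part of the integral near the
characteristic sphere, over `Ω₂ = {ξ : kt < ‖ξ⁻‖ < 3kt/2, |ξ_d| < kt/2}`. -/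
theorem stmt_15 (d : ℕ) (hd : d = 2 ∨ d = 3) (s : ℝ) (hs : 0 ≤ s) (hs' : s ≤ 1 / 2) :
    ∃ C > (0 : ℝ), ∀ k t : ℝ, 0 < k → 0 < t → 1 ≤ k * t →
      ∀ F G : EuclideanSpace ℝ (Fin d) → ℝ, Measurable F → Measurable G →
        (∀ ξ, 0 ≤ F ξ) → (∀ ξ, 0 ≤ G ξ) →
        (∫⁻ ξ in {ξ | k * t < xiMinusNorm ξ ∧ xiMinusNorm ξ < 3 * k * t / 2
              ∧ |xiLast (by omega) ξ| < k * t / 2},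
            ENNReal.ofReal (‖mSymb k t (by omega) ξ
                + ((2 * k * t / xiMinusNorm ξ - 1 : ℝ) ^ (d - 2) : ℝ)
                  * mSymb k t (by omega) (xiStar k t ξ)‖
              * (1 + ‖ξ‖ ^ 2) ^ s * F ξ * G ξ)) ≤
          ENNReal.ofReal (C * k ^ (2 * s) * t ^ (2 * s - 2))
            * (∫⁻ ξ, ENNReal.ofReal (F ξ ^ 2)) ^ (1 / 2 : ℝ)
            * (∫⁻ ξ, ENNReal.ofReal (G ξ ^ 2)) ^ (1 / 2 : ℝ) := by
  refine ⟨12, by norm_num, ?_⟩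
  intro k t hk ht hkt1 F G hF hG hF0 hG0
  have hd0 : 0 < d := by omega
  have hkt : 0 < k * t := mul_pos hk ht
  set C' : ℝ := 12 * k ^ (2 * s) * t ^ (2 * s - 2) with hC'
  have hC'0 : 0 ≤ C' := by rw [hC']; positivity
  -- pointwise bound on the set
  have hpt : ∀ ξ ∈ {ξ : EuclideanSpace ℝ (Fin d) | k * t < xiMinusNorm ξ
        ∧ xiMinusNorm ξ < 3 * k * t / 2 ∧ |xiLast hd0 ξ| < k * t / 2},
      ENNReal.ofReal (‖mSymb k t hd0 ξ
          + ((2 * k * t / xiMinusNorm ξ - 1 : ℝ) ^ (d - 2) : ℝ)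
            * mSymb k t hd0 (xiStar k t ξ)‖
        * (1 + ‖ξ‖ ^ 2) ^ s * F ξ * G ξ)
      ≤ ENNReal.ofReal (C' * (F ξ * G ξ)) := by
    intro ξ hξ
    obtain ⟨h1, h2, h3⟩ := hξ
    apply ENNReal.ofReal_le_ofReal
    have hm := mSymb_pointwise hd hd0 k t hk ht ξ h1 h2 h3
    have hw := weight_bound k t s hk ht hkt1 hs hs' hd0 ξ h1 h2 h3
    have habs : (0:ℝ) ≤ ‖mSymb k t hd0 ξ
        + ((2 * k * t / xiMinusNorm ξ - 1 : ℝ) ^ (d - 2) : ℝ)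
          * mSymb k t hd0 (xiStar k t ξ)‖ := norm_nonneg _
    have hw0 : (0:ℝ) ≤ (1 + ‖ξ‖ ^ 2) ^ s := Real.rpow_nonneg (by positivity) s
    have key : ‖mSymb k t hd0 ξ
          + ((2 * k * t / xiMinusNorm ξ - 1 : ℝ) ^ (d - 2) : ℝ)
            * mSymb k t hd0 (xiStar k t ξ)‖ * (1 + ‖ξ‖ ^ 2) ^ s
        ≤ C' := by
      have := mul_le_mul hm hw hw0 (by positivity : (0:ℝ) ≤ 6 / t ^ 2)
      refine this.trans (le_of_eq ?_)
      rw [hC']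
      have ht2 : t ^ (2 * s - 2) = t ^ (2 * s) / t ^ (2:ℝ) := Real.rpow_sub ht _ _
      have ht3 : t ^ (2:ℝ) = t ^ (2:ℕ) := by
        rw [show (2:ℝ) = ((2:ℕ):ℝ) by norm_num, Real.rpow_natCast]
      rw [ht2, ht3]
      field_simp
      ring
    calc ‖mSymb k t hd0 ξ
          + ((2 * k * t / xiMinusNorm ξ - 1 : ℝ) ^ (d - 2) : ℝ)
            * mSymb k t hd0 (xiStar k t ξ)‖ * (1 + ‖ξ‖ ^ 2) ^ s * F ξ * G ξ
        ≤ C' * F ξ * G ξ := by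
          apply mul_le_mul_of_nonneg_right _ (hG0 ξ)
          apply mul_le_mul_of_nonneg_right key (hF0 ξ)
      _ = C' * (F ξ * G ξ) := by ring
  -- integrate
  have hmeas : Measurable fun ξ : EuclideanSpace ℝ (Fin d) =>
      ENNReal.ofReal (C' * (F ξ * G ξ)) :=
    (measurable_const.mul (hF.mul hG)).ennreal_ofReal
  have step1 := setLIntegral_mono (μ := volume) hmeas hpt
  have step2 : (∫⁻ ξ in {ξ : EuclideanSpace ℝ (Fin d) | k * t < xiMinusNorm ξ
        ∧ xiMinusNorm ξ < 3 * k * t / 2 ∧ |xiLast hd0 ξ| < k * t / 2},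
      ENNReal.ofReal (C' * (F ξ * G ξ)))
      ≤ ∫⁻ ξ, ENNReal.ofReal (C' * (F ξ * G ξ)) :=
    setLIntegral_le_lintegral _ _
  have step3 : (∫⁻ ξ, ENNReal.ofReal (C' * (F ξ * G ξ)))
      = ENNReal.ofReal C' * ∫⁻ ξ, ENNReal.ofReal (F ξ) * ENNReal.ofReal (G ξ) := by
    rw [← lintegral_const_mul' _ _ ENNReal.ofReal_ne_top]
    congr 1
    funext ξ
    rw [ENNReal.ofReal_mul hC'0, ENNReal.ofReal_mul (hF0 ξ)]
  have hcs : (∫⁻ ξ, ENNReal.ofReal (F ξ) * ENNReal.ofReal (G ξ))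
      ≤ (∫⁻ ξ, ENNReal.ofReal (F ξ) ^ (2:ℝ)) ^ (1/2 : ℝ)
        * (∫⁻ ξ, ENNReal.ofReal (G ξ) ^ (2:ℝ)) ^ (1/2 : ℝ) := by
    have hconj : Real.HolderConjugate 2 2 := Real.HolderConjugate.two_two
    exact ENNReal.lintegral_mul_le_Lp_mul_Lq volume hconj
      hF.ennreal_ofReal.aemeasurable hG.ennreal_ofReal.aemeasurable
  have hFsq : (∫⁻ ξ, ENNReal.ofReal (F ξ) ^ (2:ℝ)) = ∫⁻ ξ, ENNReal.ofReal (F ξ ^ 2) := by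
    congr 1; funext ξ
    rw [ENNReal.ofReal_rpow_of_nonneg (hF0 ξ) (by norm_num)]
    norm_num [Real.rpow_natCast]
  have hGsq : (∫⁻ ξ, ENNReal.ofReal (G ξ) ^ (2:ℝ)) = ∫⁻ ξ, ENNReal.ofReal (G ξ ^ 2) := by
    congr 1; funext ξ
    rw [ENNReal.ofReal_rpow_of_nonneg (hG0 ξ) (by norm_num)]
    norm_num [Real.rpow_natCast]
  rw [hFsq, hGsq] at hcs
  calc _ ≤ _ := step1
    _ ≤ _ := step2
    _ = _ := step3
    _ ≤ ENNReal.ofReal C' * ((∫⁻ ξ, ENNReal.ofReal (F ξ ^ 2)) ^ (1/2 : ℝ)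
        * (∫⁻ ξ, ENNReal.ofReal (G ξ ^ 2)) ^ (1/2 : ℝ)) :=
      mul_le_mul_right hcs _
    _ = ENNReal.ofReal (12 * k ^ (2 * s) * t ^ (2 * s - 2))
        * (∫⁻ ξ, ENNReal.ofReal (F ξ ^ 2)) ^ (1/2 : ℝ)
        * (∫⁻ ξ, ENNReal.ofReal (G ξ ^ 2)) ^ (1/2 : ℝ) := by
      rw [hC']; ring
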